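/- α-equivalence ∼ on ground letrec expressions is an equivalence relation (reflexive, symmetric, and transitive). -/

import Mathlib

/-- Expressions of the ground letrec language LRL: atoms (coded as naturals),
lambda abstractions, applications of function symbols (coded as naturals) to
argument lists, and recursive-let expressions. -/
inductive Expr : Type where
  | atom : ℕ → Expr
  | lam : ℕ → Expr → Expr
  | app : ℕ → List Expr → Expr
  | letrec : List (ℕ × Expr) → Expr → Expr

/-- Action of an atom permutation on expressions (renames all atoms, incl. binders). -/
def permExpr (π : Equiv.Perm ℕ) : Expr → Expr
  | .atom a => .atom (π a)
  | .lam a e => .lam (π a) (permExpr π e)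
  | .app f es => .app f (es.attach.map fun e => permExpr π e.1)
  | .letrec env r =>
      .letrec (env.attach.map fun p => (π p.1.1, permExpr π p.1.2)) (permExpr π r)
decreasing_by
  all_goals simp_wf
  · have := List.sizeOf_lt_of_mem e.2; omega
  · obtain ⟨⟨x,y⟩, hm⟩ := p; have := List.sizeOf_lt_of_mem hm
    simp only [Prod.mk.sizeOf_spec] at this; simp; omega

/-- The set of free atoms of an expression. -/
def FA : Expr → Finset ℕ
  | .atom a => {a}
  | .lam a e => FA e \ {a}
  | .app _ es => (es.attach.map fun e => FA e.1).foldr (· ∪ ·) ∅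
  | .letrec env r =>
      ((env.attach.map fun p => FA p.1.2).foldr (· ∪ ·) ∅ ∪ FA r) \
        env.foldr (fun p s => insert p.1 s) ∅
decreasing_by
  all_goals simp_wf
  · have := List.sizeOf_lt_of_mem e.2; omega
  · obtain ⟨⟨x,y⟩, hm⟩ := p; have := List.sizeOf_lt_of_mem hm
    simp only [Prod.mk.sizeOf_spec] at this; simp; omega

/-- A permutation of atoms is finite iff its support is a finite set. -/
def FinSupp (π : Equiv.Perm ℕ) : Prop := {a | π a ≠ a}.Finite

/-- α-equivalence on ground letrec expressions (Definition of the paper):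
environments are compared up to a permutation `ρ` of the bindings together
with an atom permutation `π` mapping the binders of the right environment to
those of the left, with the appropriate freshness conditions. -/
inductive Aeq : Expr → Expr → Prop where
  | atom (a : ℕ) : Aeq (.atom a) (.atom a)
  | app (f : ℕ) {es es' : List Expr} (h : es.length = es'.length)
      (hes : ∀ i : Fin es.length, Aeq (es.get i) (es'.get (Fin.cast h i))) :
      Aeq (.app f es) (.app f es')
  | lamSame (a : ℕ) {e e' : Expr} (h : Aeq e e') : Aeq (.lam a e) (.lam a e')
  | lamDiff (a b : ℕ) {e e' : Expr} (hne : a ≠ b) (hf : a ∉ FA e')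
      (h : Aeq e (permExpr (Equiv.swap a b) e')) : Aeq (.lam a e) (.lam b e')
  | letrec {env env' : List (ℕ × Expr)} {r r' : Expr} (π : Equiv.Perm ℕ)
      (ρ : Equiv.Perm (Fin env.length)) (h : env.length = env'.length)
      (hdom : ∀ a, π a ≠ a → a ∈ env.map Prod.fst ∨ a ∈ env'.map Prod.fst)
      (hbind : ∀ i : Fin env.length, π (env'.get (Fin.cast h (ρ i))).1 = (env.get i).1)
      (hfresh : ∀ a ∈ env.map Prod.fst, a ∉ FA (Expr.letrec env' r'))
      (hbody : ∀ i : Fin env.length,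
        Aeq (env.get i).2 (permExpr π (env'.get (Fin.cast h (ρ i))).2))
      (hr : Aeq r (permExpr π r')) :
      Aeq (.letrec env r) (.letrec env' r')

/-- Subexpression relation. -/
inductive IsSub : Expr → Expr → Prop where
  | refl (e : Expr) : IsSub e e
  | lam {s e : Expr} (a : ℕ) : IsSub s e → IsSub s (.lam a e)
  | app {s e : Expr} (f : ℕ) {es : List Expr} : e ∈ es → IsSub s e → IsSub s (.app f es)
  | letrecBody {s r : Expr} {env : List (ℕ × Expr)} : IsSub s r → IsSub s (.letrec env r)
  | letrecEnv {s r : Expr} {env : List (ℕ × Expr)} {p : ℕ × Expr} :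
      p ∈ env → IsSub s p.2 → IsSub s (.letrec env r)

/-- Free atoms of the right-hand sides of an environment. -/
def envFA (env : List (ℕ × Expr)) : Finset ℕ := (env.map fun p => FA p.2).foldr (· ∪ ·) ∅

/-- An expression contains garbage: some letrec subexpression has a nonempty
part of its environment whose binders are free neither in the rest of the
environment nor in the body. -/
def HasGarbage (e : Expr) : Prop :=
  ∃ env r, IsSub (.letrec env r) e ∧
    ∃ envg envng : List (ℕ × Expr), env.Perm (envg ++ envng) ∧ envg ≠ [] ∧
      ∀ a ∈ envg.map Prod.fst, a ∉ envFA envng ∧ a ∉ FA r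

/-- An expression is garbage-free. -/
def GarbageFree (e : Expr) : Prop := ¬ HasGarbage e

lemma attach_map_eq {α β : Type*} (l : List α) (f : α → β) :
    l.attach.map (fun x => f x.1) = l.map f := by
  rw [show (fun x : {x // x ∈ l} => f x.1) = f ∘ Subtype.val from rfl, ← List.map_map,
    List.attach_map_subtype_val]

@[simp] lemma permExpr_atom (π : Equiv.Perm ℕ) (a : ℕ) :
    permExpr π (.atom a) = .atom (π a) := by rw [permExpr]

@[simp] lemma permExpr_lam (π : Equiv.Perm ℕ) (a : ℕ) (e : Expr) :
    permExpr π (.lam a e) = .lam (π a) (permExpr π e) := by rw [permExpr]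

@[simp] lemma permExpr_app (π : Equiv.Perm ℕ) (f : ℕ) (es : List Expr) :
    permExpr π (.app f es) = .app f (es.map (permExpr π)) := by
  rw [permExpr, attach_map_eq]

@[simp] lemma permExpr_letrec (π : Equiv.Perm ℕ) (env : List (ℕ × Expr)) (r : Expr) :
    permExpr π (.letrec env r) =
      .letrec (env.map fun p => (π p.1, permExpr π p.2)) (permExpr π r) := by
  rw [permExpr, attach_map_eq env (fun p => (π p.1, permExpr π p.2))]

@[simp] lemma FA_atom (a : ℕ) : FA (.atom a) = {a} := by rw [FA]

@[simp] lemma FA_lam (a : ℕ) (e : Expr) : FA (.lam a e) = FA e \ {a} := by rw [FA]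

@[simp] lemma FA_app (f : ℕ) (es : List Expr) :
    FA (.app f es) = (es.map FA).foldr (· ∪ ·) ∅ := by
  rw [FA, attach_map_eq]

lemma FA_letrec (env : List (ℕ × Expr)) (r : Expr) :
    FA (.letrec env r) = ((env.map fun p => FA p.2).foldr (· ∪ ·) ∅ ∪ FA r) \
      env.foldr (fun p s => insert p.1 s) ∅ := by
  rw [FA, attach_map_eq env (fun p => FA p.2)]

lemma mem_foldr_union {a : ℕ} {l : List (Finset ℕ)} :
    a ∈ l.foldr (· ∪ ·) (∅ : Finset ℕ) ↔ ∃ s ∈ l, a ∈ s := by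
  induction l with
  | nil => simp
  | cons s l ih => simp [ih]

lemma mem_foldr_insert {a : ℕ} {env : List (ℕ × Expr)} :
    a ∈ env.foldr (fun p s => insert p.1 s) (∅ : Finset ℕ) ↔ a ∈ env.map Prod.fst := by
  induction env with
  | nil => simp
  | cons p env ih => simp [ih]

lemma mem_FA_app {a : ℕ} {f : ℕ} {es : List Expr} :
    a ∈ FA (.app f es) ↔ ∃ e ∈ es, a ∈ FA e := by
  rw [FA_app, mem_foldr_union]
  constructor
  · rintro ⟨s, hs, ha⟩
    obtain ⟨e, he, rfl⟩ := List.mem_map.1 hs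
    exact ⟨e, he, ha⟩
  · rintro ⟨e, he, ha⟩
    exact ⟨FA e, List.mem_map_of_mem he, ha⟩

lemma mem_FA_letrec {a : ℕ} {env : List (ℕ × Expr)} {r : Expr} :
    a ∈ FA (.letrec env r) ↔
      ((∃ p ∈ env, a ∈ FA p.2) ∨ a ∈ FA r) ∧ a ∉ env.map Prod.fst := by
  rw [FA_letrec, Finset.mem_sdiff, Finset.mem_union, mem_foldr_union, mem_foldr_insert]
  constructor
  · rintro ⟨h1 | h1, h2⟩
    · obtain ⟨s, hs, ha⟩ := h1
      obtain ⟨p, hp, rfl⟩ := List.mem_map.1 hs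
      exact ⟨Or.inl ⟨p, hp, ha⟩, h2⟩
    · exact ⟨Or.inr h1, h2⟩
  · rintro ⟨h1 | h1, h2⟩
    · obtain ⟨p, hp, ha⟩ := h1
      exact ⟨Or.inl ⟨FA p.2, List.mem_map_of_mem hp, ha⟩, h2⟩
    · exact ⟨Or.inr h1, h2⟩

lemma Equiv.Perm.inv_apply_self (f : Equiv.Perm ℕ) (x : ℕ) : f⁻¹ (f x) = x :=
  Equiv.Perm.inv_eq_iff_eq.mpr rfl

/-! ### Size -/

def esize : Expr → ℕ
  | .atom _ => 1
  | .lam _ e => esize e + 1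
  | .app _ es => (es.attach.map fun e => esize e.1).sum + 1
  | .letrec env r => (env.attach.map fun p => esize p.1.2).sum + esize r + 1
decreasing_by
  all_goals simp_wf
  · have := List.sizeOf_lt_of_mem e.2; omega
  · obtain ⟨⟨x,y⟩, hm⟩ := p; have := List.sizeOf_lt_of_mem hm
    simp only [Prod.mk.sizeOf_spec] at this; simp; omega

@[simp] lemma esize_atom (a : ℕ) : esize (.atom a) = 1 := by rw [esize]

@[simp] lemma esize_lam (a : ℕ) (e : Expr) : esize (.lam a e) = esize e + 1 := by rw [esize]

@[simp] lemma esize_app (f : ℕ) (es : List Expr) :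
    esize (.app f es) = (es.map esize).sum + 1 := by
  rw [esize, attach_map_eq]

@[simp] lemma esize_letrec (env : List (ℕ × Expr)) (r : Expr) :
    esize (.letrec env r) = (env.map fun p => esize p.2).sum + esize r + 1 := by
  rw [esize, attach_map_eq env (fun p => esize p.2)]

lemma esize_lt_app {e : Expr} {f : ℕ} {es : List Expr} (h : e ∈ es) :
    esize e < esize (.app f es) := by
  have : esize e ≤ (es.map esize).sum := List.le_sum_of_mem (List.mem_map_of_mem h)
  simp only [esize_app]; omega

lemma esize_lt_letrec_env {p : ℕ × Expr} {env : List (ℕ × Expr)} {r : Expr} (h : p ∈ env) :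
    esize p.2 < esize (.letrec env r) := by
  have : esize p.2 ≤ (env.map fun q => esize q.2).sum :=
    List.le_sum_of_mem (List.mem_map_of_mem h)
  simp only [esize_letrec]; omega

lemma esize_lt_letrec_body {env : List (ℕ × Expr)} {r : Expr} :
    esize r < esize (.letrec env r) := by simp only [esize_letrec]; omega

/-! ### Induction principles -/

theorem Expr.strongInd {P : Expr → Prop}
    (H : ∀ e, (∀ e', esize e' < esize e → P e') → P e) : ∀ e, P e :=
  fun e => H e (fun e' _ => Expr.strongInd H e')
termination_by e => esize e
decreasing_by assumption

theorem Expr.myInd {P : Expr → Prop}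
    (hatom : ∀ a, P (.atom a))
    (hlam : ∀ a e, P e → P (.lam a e))
    (happ : ∀ f es, (∀ e ∈ es, P e) → P (.app f es))
    (hlet : ∀ env r, (∀ p ∈ env, P p.2) → P r → P (.letrec env r)) : ∀ e, P e := by
  apply Expr.strongInd
  intro e IH
  match e with
  | .atom a => exact hatom a
  | .lam a e => exact hlam a e (IH e (by simp))
  | .app f es => exact happ f es (fun e he => IH e (esize_lt_app he))
  | .letrec env r =>
      exact hlet env r (fun p hp => IH p.2 (esize_lt_letrec_env hp))
        (IH r esize_lt_letrec_body)

/-! ### permExpr algebra -/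

@[simp] lemma permExpr_one (e : Expr) : permExpr 1 e = e := by
  induction e using Expr.myInd with
  | hatom a => simp
  | hlam a e ih => simp [ih]
  | happ f es ih =>
      simp only [permExpr_app]
      congr 1
      rw [show es = es.map id by simp]
      rw [List.map_map]
      apply List.map_congr_left
      intro e he
      simp [ih e (by simpa using he)]
  | hlet env r ihe ihr =>
      simp only [permExpr_letrec, ihr, Equiv.Perm.one_apply]
      congr 1
      rw [show env = env.map id by simp]
      rw [List.map_map]
      apply List.map_congr_left
      intro p hp
      simp [ihe p (by simpa using hp)]

lemma permExpr_mul (π σ : Equiv.Perm ℕ) (e : Expr) :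
    permExpr π (permExpr σ e) = permExpr (π * σ) e := by
  induction e using Expr.myInd with
  | hatom a => simp
  | hlam a e ih => simp [ih]
  | happ f es ih =>
      simp only [permExpr_app, List.map_map]
      congr 1
      apply List.map_congr_left
      intro e he
      simp [ih e he]
  | hlet env r ihe ihr =>
      simp only [permExpr_letrec, ihr, List.map_map]
      congr 1
      apply List.map_congr_left
      intro p hp
      simp [ihe p hp]

@[simp] lemma esize_perm (π : Equiv.Perm ℕ) (e : Expr) : esize (permExpr π e) = esize e := by
  induction e using Expr.myInd with
  | hatom a => simp
  | hlam a e ih => simp [ih]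
  | happ f es ih =>
      simp only [permExpr_app, esize_app, List.map_map]
      congr 2
      apply List.map_congr_left
      intro e he
      simp [ih e he]
  | hlet env r ihe ihr =>
      simp only [permExpr_letrec, esize_letrec, ihr, List.map_map]
      have : List.map ((fun p => esize p.2) ∘ fun p : ℕ × Expr => (π p.1, permExpr π p.2)) env
          = List.map (fun p => esize p.2) env :=
        List.map_congr_left (fun p hp => by simp [ihe p hp])
      rw [this]

lemma FA_perm (π : Equiv.Perm ℕ) (e : Expr) : FA (permExpr π e) = (FA e).image π := by
  induction e using Expr.myInd with
  | hatom a => simp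
  | hlam a e ih =>
      simp only [permExpr_lam, FA_lam, ih]
      rw [Finset.image_sdiff _ _ π.injective]; simp
  | happ f es ih =>
      ext x
      simp only [permExpr_app, mem_FA_app, Finset.mem_image, List.mem_map]
      constructor
      · rintro ⟨e', ⟨e, he, rfl⟩, hx⟩
        rw [ih e he] at hx
        obtain ⟨y, hy, rfl⟩ := Finset.mem_image.1 hx
        exact ⟨y, ⟨e, he, hy⟩, rfl⟩
      · rintro ⟨y, ⟨e, he, hy⟩, rfl⟩
        exact ⟨permExpr π e, ⟨e, he, rfl⟩, by rw [ih e he]; exact Finset.mem_image_of_mem _ hy⟩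
  | hlet env r ihe ihr =>
      ext x
      simp only [permExpr_letrec, mem_FA_letrec, List.mem_map, ihr, Finset.mem_image]
      constructor
      · rintro ⟨h1, h2⟩
        have h2' : ∀ p ∈ env, π p.1 ≠ x := by
          intro q hq hqx
          exact h2 ⟨(π q.1, permExpr π q.2), ⟨q, hq, rfl⟩, hqx⟩
        rcases h1 with ⟨q, ⟨p, hp, rfl⟩, hx⟩ | ⟨y, hy, rfl⟩
        · rw [ihe p hp] at hx
          obtain ⟨y, hy, rfl⟩ := Finset.mem_image.1 hx
          refine ⟨y, ⟨Or.inl ⟨p, hp, hy⟩, ?_⟩, rfl⟩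
          rintro ⟨q, hq, hqy⟩
          exact h2' q hq (by rw [hqy])
        · refine ⟨y, ⟨Or.inr hy, ?_⟩, rfl⟩
          rintro ⟨q, hq, hqy⟩
          exact h2' q hq (by rw [hqy])
      · rintro ⟨y, ⟨h1, h2⟩, rfl⟩
        constructor
        · rcases h1 with ⟨p, hp, hy⟩ | hy
          · exact Or.inl ⟨(π p.1, permExpr π p.2), ⟨p, hp, rfl⟩,
              by rw [ihe p hp]; exact Finset.mem_image_of_mem _ hy⟩
          · exact Or.inr ⟨y, hy, rfl⟩
        · rintro ⟨q, ⟨p, hp, rfl⟩, hxy⟩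
          simp only at hxy
          exact h2 ⟨p, hp, π.injective hxy⟩
/-! ### Reflexivity -/

lemma aeq_refl : ∀ e : Expr, Aeq e e := by
  intro e
  induction e using Expr.myInd with
  | hatom a => exact .atom a
  | hlam a e ih => exact .lamSame a ih
  | happ f es ih =>
      refine Aeq.app f rfl ?_
      intro i
      have : es.get (Fin.cast rfl i) = es.get i := by simp
      rw [this]
      exact ih _ (List.get_mem es i)
  | hlet env r ihe ihr =>
      refine Aeq.letrec 1 (Equiv.refl _) rfl ?_ ?_ ?_ ?_ ?_
      · intro a ha; simp at ha
      · intro i; simp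
      · intro a ha
        rw [mem_FA_letrec]
        rintro ⟨_, h2⟩; exact h2 ha
      · intro i; simpa using ihe _ (List.get_mem env i)
      · simpa using ihr

/-! ### Extending a partial injection to a permutation -/

lemma exists_perm_extend : ∀ (n : ℕ) (S : Finset ℕ) (g : ℕ → ℕ), Set.InjOn g S →
    (S.filter fun x => g x ≠ x).card ≤ n →
    ∃ τ : Equiv.Perm ℕ, (∀ x ∈ S, τ x = g x) ∧ ∀ x, τ x ≠ x → x ∈ S ∨ ∃ y ∈ S, g y = x := by
  intro n
  induction n with
  | zero =>
      intro S g hinj hcard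
      have hemp : S.filter (fun x => g x ≠ x) = ∅ :=
        Finset.card_eq_zero.1 (Nat.le_antisymm hcard (Nat.zero_le _))
      refine ⟨1, ?_, ?_⟩
      · intro x hx
        by_contra hne
        have : x ∈ S.filter (fun x => g x ≠ x) := Finset.mem_filter.2 ⟨hx, fun hc => hne (by simp [hc])⟩
        simp [hemp] at this
      · intro x hx; simp at hx
  | succ n IH =>
      intro S g hinj hcard
      by_cases h0 : (S.filter fun x => g x ≠ x) = ∅
      · refine ⟨1, ?_, ?_⟩
        · intro x hx
          by_contra hne
          have : x ∈ S.filter (fun x => g x ≠ x) :=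
            Finset.mem_filter.2 ⟨hx, fun hc => hne (by simp [hc])⟩
          simp [h0] at this
        · intro x hx; simp at hx
      · obtain ⟨a, ha⟩ := Finset.nonempty_iff_ne_empty.2 h0
        rw [Finset.mem_filter] at ha
        obtain ⟨haS, hga⟩ := ha
        set g' : ℕ → ℕ := fun x => Equiv.swap a (g a) (g x) with hg'
        have hinj' : Set.InjOn g' S := fun x hx y hy hxy =>
          hinj hx hy ((Equiv.swap a (g a)).injective hxy)
        have hsub : S.filter (fun x => g' x ≠ x) ⊆ (S.filter fun x => g x ≠ x).erase a := by
          intro x hx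
          rw [Finset.mem_filter] at hx
          obtain ⟨hxS, hx2⟩ := hx
          have hxa : x ≠ a := by
            rintro rfl
            exact hx2 (by simp [hg', Equiv.swap_apply_right])
          rw [Finset.mem_erase, Finset.mem_filter]
          refine ⟨hxa, hxS, ?_⟩
          intro hgx
          apply hx2
          rw [hg']
          simp only [hgx]
          have hxga : x ≠ g a := by
            intro hc
            exact hxa (hinj hxS haS (hgx.trans hc))
          exact Equiv.swap_apply_of_ne_of_ne hxa hxga
        have hcard' : (S.filter fun x => g' x ≠ x).card ≤ n := by
          have h1 : ((S.filter fun x => g x ≠ x).erase a).card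
              = (S.filter fun x => g x ≠ x).card - 1 :=
            Finset.card_erase_of_mem (Finset.mem_filter.2 ⟨haS, hga⟩)
          have h2 : 1 ≤ (S.filter fun x => g x ≠ x).card :=
            Finset.card_pos.2 ⟨a, Finset.mem_filter.2 ⟨haS, hga⟩⟩
          have := Finset.card_le_card hsub
          omega
        obtain ⟨τ', hτ'1, hτ'2⟩ := IH S g' hinj' hcard'
        refine ⟨Equiv.swap a (g a) * τ', ?_, ?_⟩
        · intro x hx
          have : τ' x = g' x := hτ'1 x hx
          simp only [Equiv.Perm.mul_apply, this, hg', Equiv.swap_apply_self]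
        · intro x hx
          by_cases hx' : τ' x = x
          · rw [Equiv.Perm.mul_apply, hx'] at hx
            rcases eq_or_ne x a with rfl | hxa
            · exact Or.inl haS
            · rcases eq_or_ne x (g a) with rfl | hxga
              · exact Or.inr ⟨a, haS, rfl⟩
              · exact absurd (Equiv.swap_apply_of_ne_of_ne hxa hxga) hx
          · rcases hτ'2 x hx' with h | ⟨y, hy, hgy⟩
            · exact Or.inl h
            · have hgy' : Equiv.swap a (g a) (g y) = x := hgy
              rcases eq_or_ne (g y) a with hya | hya
              · rw [hya, Equiv.swap_apply_left] at hgy'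
                exact Or.inr ⟨a, haS, hgy'⟩
              · rcases eq_or_ne (g y) (g a) with hyga | hyga
                · rw [hyga, Equiv.swap_apply_right] at hgy'
                  exact Or.inl (hgy' ▸ haS)
                · rw [Equiv.swap_apply_of_ne_of_ne hya hyga] at hgy'
                  exact Or.inr ⟨y, hy, hgy'⟩

lemma exists_perm_ext (S : Finset ℕ) (g : ℕ → ℕ) (hinj : Set.InjOn g S) :
    ∃ τ : Equiv.Perm ℕ, (∀ x ∈ S, τ x = g x) ∧ ∀ x, τ x ≠ x → x ∈ S ∨ ∃ y ∈ S, g y = x :=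
  exists_perm_extend _ S g hinj le_rfl

/-! ### Equivariance -/

lemma aeq_perm {e e' : Expr} (σ : Equiv.Perm ℕ) (h : Aeq e e') :
    Aeq (permExpr σ e) (permExpr σ e') := by
  induction h with
  | atom a => simpa using Aeq.atom (σ a)
  | @app f es es' hlen hes ih =>
      simp only [permExpr_app]
      refine Aeq.app f (by simp [hlen]) ?_
      intro i
      have hi : i.1 < es.length := by simpa using i.2
      have := ih ⟨i.1, hi⟩
      simp only [List.get_eq_getElem, Fin.coe_cast, List.getElem_map] at this ⊢
      exact this
  | lamSame a h ih => simp only [permExpr_lam]; exact .lamSame _ ih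
  | @lamDiff a b e e' hne hf h ih =>
      simp only [permExpr_lam]
      refine Aeq.lamDiff (σ a) (σ b) (fun hh => hne (σ.injective hh)) ?_ ?_
      · rw [FA_perm]
        intro hmem
        obtain ⟨y, hy, hxy⟩ := Finset.mem_image.1 hmem
        exact hf (by rwa [σ.injective hxy] at hy)
      · have hsw : Equiv.swap (σ a) (σ b) * σ = σ * Equiv.swap a b :=
          (Equiv.mul_swap_eq_swap_mul σ a b).symm
        rw [permExpr_mul, hsw, ← permExpr_mul]
        exact ih
  | @letrec env env' r r' π ρ hlen hdom hbind hfresh hbody hr ihb ihr =>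
      simp only [permExpr_letrec]
      have hlen1 : (env.map fun p => (σ p.1, permExpr σ p.2)).length = env.length :=
        List.length_map _
      refine Aeq.letrec (σ * π * σ⁻¹) ((finCongr hlen1.symm).permCongr ρ) (by simp [hlen]) ?_ ?_ ?_ ?_ ?_
      · intro a ha
        have hπ : π (σ⁻¹ a) ≠ σ⁻¹ a := by
          intro hc
          apply ha
          simp only [Equiv.Perm.mul_apply, hc]
          exact σ.apply_symm_apply a
        rcases hdom _ hπ with hm | hm
        · left
          obtain ⟨p, hp, hpa⟩ := List.mem_map.1 hm
          exact List.mem_map.2 ⟨(σ p.1, permExpr σ p.2), List.mem_map.2 ⟨p, hp, rfl⟩,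
            by simp [hpa]⟩
        · right
          obtain ⟨p, hp, hpa⟩ := List.mem_map.1 hm
          exact List.mem_map.2 ⟨(σ p.1, permExpr σ p.2), List.mem_map.2 ⟨p, hp, rfl⟩,
            by simp [hpa]⟩
      · intro i
        have := hbind ((finCongr hlen1.symm).symm i)
        simp only [List.get_eq_getElem, Fin.coe_cast, List.getElem_map, Equiv.permCongr_apply,
          finCongr_symm, finCongr_apply_coe, Equiv.Perm.mul_apply,
          Equiv.Perm.inv_apply_self] at this ⊢
        rw [this]
      · intro x hx
        obtain ⟨q, hq, hqx⟩ := List.mem_map.1 hx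
        obtain ⟨p, hp, rfl⟩ := List.mem_map.1 hq
        have hfr := hfresh p.1 (List.mem_map.2 ⟨p, hp, rfl⟩)
        rw [show Expr.letrec (List.map (fun p => (σ p.1, permExpr σ p.2)) env') (permExpr σ r')
            = permExpr σ (.letrec env' r') from (permExpr_letrec σ env' r').symm, FA_perm]
        intro hmem
        obtain ⟨y, hy, hxy⟩ := Finset.mem_image.1 hmem
        apply hfr
        have : y = p.1 := σ.injective (by rw [hxy, ← hqx])
        rwa [this] at hy
      · intro i
        have := ihb ((finCongr hlen1.symm).symm i)
        rw [permExpr_mul] at this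
        simp only [List.get_eq_getElem, Fin.coe_cast, List.getElem_map, Equiv.permCongr_apply,
          finCongr_symm, finCongr_apply_coe] at this ⊢
        rw [permExpr_mul, show σ * π * σ⁻¹ * σ = σ * π by group]
        exact this
      · rw [permExpr_mul, show σ * π * σ⁻¹ * σ = σ * π by group, ← permExpr_mul]
        exact ihr
/-! ### α-equivalence preserves free atoms -/

lemma aeq_FA {e e' : Expr} (h : Aeq e e') : FA e = FA e' := by
  induction h with
  | atom a => rfl
  | @app f es es' hlen hes ih =>
      ext x
      simp only [mem_FA_app]
      constructor
      · rintro ⟨e, he, hx⟩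
        obtain ⟨i, rfl⟩ := List.mem_iff_get.1 he
        rw [ih i] at hx
        exact ⟨es'.get (Fin.cast hlen i), List.get_mem es' _, hx⟩
      · rintro ⟨e, he, hx⟩
        obtain ⟨j, rfl⟩ := List.mem_iff_get.1 he
        have hji : es'.get (Fin.cast hlen (Fin.cast hlen.symm j)) = es'.get j := by
          simp [List.get_eq_getElem]
        rw [← hji, ← ih (Fin.cast hlen.symm j)] at hx
        exact ⟨es.get (Fin.cast hlen.symm j), List.get_mem es _, hx⟩
  | lamSame a h ih => simp [ih]
  | @lamDiff a b e e' hne hf h ih =>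
      simp only [FA_lam, ih, FA_perm]
      ext x
      simp only [Finset.mem_sdiff, Finset.mem_image, Finset.mem_singleton]
      constructor
      · rintro ⟨⟨y, hy, rfl⟩, hne'⟩
        rcases eq_or_ne y a with rfl | hya
        · exact absurd hy hf
        · rcases eq_or_ne y b with rfl | hyb
          · simp [Equiv.swap_apply_right] at hne'
          · rw [Equiv.swap_apply_of_ne_of_ne hya hyb]
            exact ⟨hy, hyb⟩
      · rintro ⟨hy, hyb⟩
        have hya : x ≠ a := fun hc => hf (hc ▸ hy)
        exact ⟨⟨x, hy, Equiv.swap_apply_of_ne_of_ne hya hyb⟩, hya⟩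
  | @letrec env env' r r' π ρ hlen hdom hbind hfresh hbody hr ihb ihr =>
      have key1 : ∀ b ∈ env'.map Prod.fst, π b ∈ env.map Prod.fst := by
        intro b hb
        obtain ⟨p', hp', rfl⟩ := List.mem_map.1 hb
        obtain ⟨j, rfl⟩ := List.mem_iff_get.1 hp'
        set i := ρ.symm (Fin.cast hlen.symm j) with hi
        have hb' := hbind i
        have hcast : env'.get (Fin.cast hlen (ρ i)) = env'.get j := by
          simp [List.get_eq_getElem, hi]
        rw [hcast] at hb'
        rw [hb']
        exact List.mem_map.2 ⟨env.get i, List.get_mem env _, rfl⟩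
      have key3 : ∀ x ∈ FA (Expr.letrec env' r'), π x = x := by
        intro x hx
        by_contra hne
        rcases hdom x hne with h1 | h1
        · exact hfresh x h1 hx
        · exact (mem_FA_letrec.1 hx).2 h1
      ext x
      rw [mem_FA_letrec, mem_FA_letrec]
      constructor
      · rintro ⟨h1, h2⟩
        have step : ∃ y, π y = x ∧ ((∃ p ∈ env', y ∈ FA p.2) ∨ y ∈ FA r') := by
          rcases h1 with ⟨p, hp, hx⟩ | hx
          · obtain ⟨i, rfl⟩ := List.mem_iff_get.1 hp
            rw [ihb i, FA_perm] at hx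
            obtain ⟨y, hy, rfl⟩ := Finset.mem_image.1 hx
            exact ⟨y, rfl, Or.inl ⟨env'.get (Fin.cast hlen (ρ i)), List.get_mem env' _, hy⟩⟩
          · rw [ihr, FA_perm] at hx
            obtain ⟨y, hy, rfl⟩ := Finset.mem_image.1 hx
            exact ⟨y, rfl, Or.inr hy⟩
        obtain ⟨y, rfl, hy⟩ := step
        have hyB2 : y ∉ env'.map Prod.fst := by
          intro hc
          exact h2 (key1 y hc)
        have hyF2 : y ∈ FA (Expr.letrec env' r') := mem_FA_letrec.2 ⟨hy, hyB2⟩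
        rw [key3 y hyF2]
        exact ⟨hy, hyB2⟩
      · rintro ⟨h1, h2⟩
        have hxF2 : x ∈ FA (Expr.letrec env' r') := mem_FA_letrec.2 ⟨h1, h2⟩
        have hfix := key3 x hxF2
        have hxB1 : x ∉ env.map Prod.fst := fun hc => hfresh x hc hxF2
        refine ⟨?_, hxB1⟩
        rcases h1 with ⟨p', hp', hx⟩ | hx
        · obtain ⟨j, rfl⟩ := List.mem_iff_get.1 hp'
          set i := ρ.symm (Fin.cast hlen.symm j) with hi
          have hcast : env'.get (Fin.cast hlen (ρ i)) = env'.get j := by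
            simp [List.get_eq_getElem, hi]
          left
          refine ⟨env.get i, List.get_mem env _, ?_⟩
          rw [ihb i, FA_perm, hcast]
          exact Finset.mem_image.2 ⟨x, hx, hfix⟩
        · right
          rw [ihr, FA_perm]
          exact Finset.mem_image.2 ⟨x, hx, hfix⟩
/-! ### A permutation fixing the free atoms gives an α-equivalent term -/

lemma esize_pos (e : Expr) : 0 < esize e := by
  cases e <;> simp

lemma aeq_perm_fix : ∀ (e : Expr) (π : Equiv.Perm ℕ), (∀ a ∈ FA e, π a = a) →
    Aeq e (permExpr π e) := by
  intro e
  induction e using Expr.myInd with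
  | hatom a =>
      intro π hfix
      rw [permExpr_atom, hfix a (by simp)]
      exact .atom a
  | hlam a e ih =>
      intro π hfix
      rw [permExpr_lam]
      rcases eq_or_ne (π a) a with hpa | hpa
      · rw [hpa]
        refine .lamSame a (ih π ?_)
        intro x hx
        rcases eq_or_ne x a with rfl | hxa
        · exact hpa
        · exact hfix x (by simp [hx, hxa])
      · refine .lamDiff a (π a) (Ne.symm hpa) ?_ ?_
        · rw [FA_perm]
          rintro hmem
          obtain ⟨y, hy, hxy⟩ := Finset.mem_image.1 hmem
          rcases eq_or_ne y a with rfl | hya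
          · exact hpa hxy
          · have : π y = y := hfix y (by simp [hy, hya])
            exact hya (by rw [← hxy, this])
        · rw [permExpr_mul]
          apply ih
          intro x hx
          rw [Equiv.Perm.mul_apply]
          rcases eq_or_ne x a with rfl | hxa
          · simp [Equiv.swap_apply_right]
          · have hfx : π x = x := hfix x (by simp [hx, hxa])
            rw [hfx]
            have hxpa : x ≠ π a := fun hc => hxa (π.injective (by rw [← hc, hfx]))
            exact Equiv.swap_apply_of_ne_of_ne hxa hxpa
  | happ f es ih =>
      intro π hfix
      rw [permExpr_app]
      refine .app f (by simp) ?_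
      intro i
      simp only [List.get_eq_getElem, Fin.coe_cast, List.getElem_map]
      refine ih _ (es.getElem_mem _) π ?_
      intro x hx
      exact hfix x (mem_FA_app.2 ⟨_, es.getElem_mem _, hx⟩)
  | hlet env r ihe ihr =>
      intro π hfix
      rw [permExpr_letrec]
      set S : Finset ℕ := (env.map Prod.fst).toFinset.image π with hS
      obtain ⟨τ, hτ1, hτ2⟩ := exists_perm_ext S ⇑π⁻¹ (Equiv.injective π⁻¹).injOn
      have memS : ∀ b, b ∈ env.map Prod.fst → π b ∈ S := by
        intro b hb
        exact Finset.mem_image_of_mem _ (List.mem_toFinset.2 hb)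
      have tau_pi : ∀ b ∈ env.map Prod.fst, τ (π b) = b := by
        intro b hb
        rw [hτ1 _ (memS b hb)]
        exact Equiv.Perm.inv_apply_self π b
      have tau_fix : ∀ x, x ∉ env.map Prod.fst → π x = x → τ x = x := by
        intro x hxB hπx
        by_contra hτx
        rcases hτ2 x hτx with hmem | ⟨y, hy, rfl⟩
        · obtain ⟨b, hb, hbx⟩ := Finset.mem_image.1 hmem
          have hb' : b ∈ env.map Prod.fst := List.mem_toFinset.1 hb
          have hbe : b = x := π.injective (hbx.trans hπx.symm)
          exact hxB (hbe ▸ hb')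
        · obtain ⟨b, hb, rfl⟩ := Finset.mem_image.1 hy
          have hb' : b ∈ env.map Prod.fst := List.mem_toFinset.1 hb
          rw [Equiv.Perm.inv_apply_self] at hxB
          exact hxB hb'
      refine Aeq.letrec τ (Equiv.refl _) (List.length_map _).symm ?_ ?_ ?_ ?_ ?_
      · intro a ha
        rcases hτ2 a ha with hmem | ⟨y, hy, rfl⟩
        · right
          obtain ⟨b, hb, rfl⟩ := Finset.mem_image.1 hmem
          obtain ⟨p, hp, rfl⟩ := List.mem_map.1 (List.mem_toFinset.1 hb)
          exact List.mem_map.2 ⟨(π p.1, permExpr π p.2), List.mem_map.2 ⟨p, hp, rfl⟩, rfl⟩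
        · left
          obtain ⟨b, hb, rfl⟩ := Finset.mem_image.1 hy
          rw [Equiv.Perm.inv_apply_self]
          exact List.mem_toFinset.1 hb
      · intro i
        simp only [List.get_eq_getElem, Fin.coe_cast, List.getElem_map, Equiv.refl_apply]
        exact tau_pi _ (List.mem_map.2 ⟨env[i.1], env.getElem_mem _, rfl⟩)
      · intro a ha
        rw [show Expr.letrec (List.map (fun p => (π p.1, permExpr π p.2)) env) (permExpr π r)
            = permExpr π (.letrec env r) from (permExpr_letrec π env r).symm, FA_perm]
        intro hmem
        obtain ⟨y, hy, hxy⟩ := Finset.mem_image.1 hmem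
        have hfy : π y = y := hfix y hy
        have : y = a := by rw [← hxy, hfy]
        subst this
        exact (mem_FA_letrec.1 hy).2 ha
      · intro i
        simp only [List.get_eq_getElem, Fin.coe_cast, List.getElem_map, Equiv.refl_apply]
        rw [permExpr_mul]
        refine ihe _ (env.getElem_mem _) (τ * π) ?_
        intro x hx
        rw [Equiv.Perm.mul_apply]
        by_cases hxB : x ∈ env.map Prod.fst
        · exact tau_pi x hxB
        · have hxF : x ∈ FA (Expr.letrec env r) :=
            mem_FA_letrec.2 ⟨Or.inl ⟨env[i.1], env.getElem_mem _, hx⟩, hxB⟩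
          have hπx : π x = x := hfix x hxF
          rw [hπx]
          exact (tau_fix x hxB hπx).trans rfl
      · rw [permExpr_mul]
        refine ihr (τ * π) ?_
        intro x hx
        rw [Equiv.Perm.mul_apply]
        by_cases hxB : x ∈ env.map Prod.fst
        · exact tau_pi x hxB
        · have hxF : x ∈ FA (Expr.letrec env r) := mem_FA_letrec.2 ⟨Or.inr hx, hxB⟩
          have hπx : π x = x := hfix x hxF
          rw [hπx]
          exact tau_fix x hxB hπx

/-! ### Symmetry -/

lemma aeq_symm : ∀ {e e' : Expr}, Aeq e e' → Aeq e' e := by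
  intro e e' h
  induction h with
  | atom a => exact .atom a
  | @app f es es' hlen hes ih =>
      refine .app f hlen.symm ?_
      intro j
      have := ih (Fin.cast hlen.symm j)
      simp only [List.get_eq_getElem, Fin.coe_cast] at this ⊢
      exact this
  | lamSame a h ih => exact .lamSame a ih
  | @lamDiff a b e e' hne hf h ih =>
      refine .lamDiff b a hne.symm ?_ ?_
      · rw [aeq_FA h, FA_perm]
        intro hmem
        obtain ⟨y, hy, hxy⟩ := Finset.mem_image.1 hmem
        have : y = a := by
          have := congrArg (Equiv.swap a b) hxy
          rwa [Equiv.swap_apply_self, Equiv.swap_apply_right] at this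
        exact hf (this ▸ hy)
      · have h2 := aeq_perm (Equiv.swap a b) ih
        rw [permExpr_mul, Equiv.swap_mul_self, permExpr_one] at h2
        rw [Equiv.swap_comm]
        exact h2
  | @letrec env env' r r' π ρ hlen hdom hbind hfresh hbody hr ihb ihr =>
      have horig : Aeq (.letrec env r) (.letrec env' r') :=
        Aeq.letrec π ρ hlen hdom hbind hfresh hbody hr
      refine Aeq.letrec π⁻¹
        ((finCongr hlen.symm).trans (ρ.symm.trans (finCongr hlen))) hlen.symm ?_ ?_ ?_ ?_ ?_
      · intro a ha
        have : π a ≠ a := by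
          intro hc
          exact ha (by rw [← hc, Equiv.Perm.inv_apply_self]; exact hc.symm)
        rcases hdom a this with h1 | h1
        · exact Or.inr h1
        · exact Or.inl h1
      · intro j
        have := hbind (ρ.symm (Fin.cast hlen.symm j))
        simp only [List.get_eq_getElem, Fin.coe_cast, Equiv.apply_symm_apply,
          Equiv.trans_apply, finCongr_apply] at this ⊢
        rw [← this, Equiv.Perm.inv_apply_self]
      · intro a ha
        intro hmem
        rw [aeq_FA horig] at hmem
        exact (mem_FA_letrec.1 hmem).2 ha
      · intro j
        have := aeq_perm π⁻¹ (ihb (ρ.symm (Fin.cast hlen.symm j)))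
        rw [permExpr_mul, inv_mul_cancel, permExpr_one] at this
        simp only [List.get_eq_getElem, Fin.coe_cast, Equiv.apply_symm_apply,
          Equiv.trans_apply, finCongr_apply] at this ⊢
        exact this
      · have := aeq_perm π⁻¹ ihr
        rw [permExpr_mul, inv_mul_cancel, permExpr_one] at this
        exact this
/-! ### Transitivity -/

lemma aeq_trans : ∀ (n : ℕ) (e1 e2 e3 : Expr), esize e1 ≤ n →
    Aeq e1 e2 → Aeq e2 e3 → Aeq e1 e3 := by
  intro n
  induction n with
  | zero =>
      intro e1 e2 e3 hsz _ _
      have := esize_pos e1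
      omega
  | succ n IH =>
      intro e1 e2 e3 hsz h12 h23
      cases h12 with
      | atom a => exact h23
      | @app f es es2 hlen hes =>
          cases h23 with
          | @app _ _ es3 hlen2 hes2 =>
              refine .app f (hlen.trans hlen2) ?_
              intro i
              have hsz' : esize (es.get i) ≤ n := by
                have hmem : es.get i ∈ es := by
                  simp only [List.get_eq_getElem]; exact es.getElem_mem _
                have h1 := esize_lt_app (f := f) hmem
                simp only [esize_app] at h1 hsz ⊢
                omega
              have := IH _ _ _ hsz' (hes i) (hes2 (Fin.cast hlen i))
              simp only [List.get_eq_getElem, Fin.coe_cast] at this ⊢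
              exact this
      | @lamSame a e1' e2' h =>
          cases h23 with
          | lamSame _ h2 =>
              exact .lamSame a (IH _ _ _ (by simp at hsz; omega) h h2)
          | @lamDiff _ c _ e3' hne hf h2 =>
              exact .lamDiff a c hne hf (IH _ _ _ (by simp at hsz; omega) h h2)
      | @lamDiff a b e1' e2' hne hf h =>
          have hsz' : esize e1' ≤ n := by simp at hsz; omega
          cases h23 with
          | lamSame _ h2 =>
              refine .lamDiff a b hne ?_ ?_
              · rw [← aeq_FA h2]; exact hf
              · exact IH _ _ _ hsz' h (aeq_perm _ h2)
          | @lamDiff _ c _ e3' hne2 hf2 h2 =>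
              rcases eq_or_ne a c with rfl | hac
              · refine .lamSame a ?_
                have hp := aeq_perm (Equiv.swap a b) h2
                rw [permExpr_mul, Equiv.swap_comm b a, Equiv.swap_mul_self, permExpr_one] at hp
                exact IH _ _ _ hsz' h hp
              · have ha3 : a ∉ FA e3' := by
                  intro hmem
                  apply hf
                  rw [aeq_FA h2, FA_perm]
                  exact Finset.mem_image.2 ⟨a, hmem, Equiv.swap_apply_of_ne_of_ne hne hac⟩
                refine .lamDiff a c hac ha3 ?_
                have hp := aeq_perm (Equiv.swap a b) h2
                rw [permExpr_mul] at hp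
                have hstep := IH _ _ _ hsz' h hp
                have hcomp : Equiv.swap a b * Equiv.swap b c
                    = Equiv.swap a c * Equiv.swap a b := by
                  ext x
                  simp only [Equiv.Perm.mul_apply, Equiv.swap_apply_def]
                  split_ifs <;> simp_all
                rw [hcomp] at hstep
                have hfix : Aeq (permExpr (Equiv.swap a c * Equiv.swap a b) e3')
                    (permExpr (Equiv.swap a c) e3') := by
                  rw [← permExpr_mul]
                  exact aeq_perm _ (aeq_symm (aeq_perm_fix e3' (Equiv.swap a b) (fun x hx =>
                    Equiv.swap_apply_of_ne_of_ne (fun hc => ha3 (hc ▸ hx))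
                      (fun hc => hf2 (hc ▸ hx)))))
                exact IH _ _ _ hsz' hstep hfix
      | @letrec env env2 r r2 π ρ hlen hdom hbind hfresh hbody hr =>
          cases h23 with
          | @letrec _ env3 _ r3 π2 ρ2 hlen2 hdom2 hbind2 hfresh2 hbody2 hr2 =>
              have hF23 : FA (Expr.letrec env2 r2) = FA (Expr.letrec env3 r3) :=
                aeq_FA (Aeq.letrec π2 ρ2 hlen2 hdom2 hbind2 hfresh2 hbody2 hr2)
              obtain ⟨τ, hτ1, hτ2⟩ := exists_perm_ext (env3.map Prod.fst).toFinset ⇑(π * π2)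
                (π * π2).injective.injOn
              have fact3 : ∀ y ∈ env3.map Prod.fst, (π * π2) y ∈ env.map Prod.fst := by
                intro y hy
                obtain ⟨p3, hp3, rfl⟩ := List.mem_map.1 hy
                obtain ⟨k, rfl⟩ := List.mem_iff_get.1 hp3
                have hb2 := hbind2 (ρ2.symm (Fin.cast hlen2.symm k))
                have hb1 := hbind (ρ.symm (Fin.cast hlen.symm (ρ2.symm (Fin.cast hlen2.symm k))))
                simp only [List.get_eq_getElem, Fin.coe_cast, Equiv.apply_symm_apply] at hb2 hb1
                refine List.mem_map.2
                  ⟨env.get (ρ.symm (Fin.cast hlen.symm (ρ2.symm (Fin.cast hlen2.symm k)))),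
                    List.get_mem _ _, ?_⟩
                simp only [List.get_eq_getElem, Fin.coe_cast]
                rw [Equiv.Perm.mul_apply, hb2, hb1]
              have fact1 : ∀ x ∈ FA (Expr.letrec env3 r3), (π * π2) x = x := by
                intro x hx
                have h2' : π2 x = x := by
                  by_contra hne'
                  rcases hdom2 x hne' with hm | hm
                  · exact hfresh2 x hm hx
                  · exact (mem_FA_letrec.1 hx).2 hm
                rw [Equiv.Perm.mul_apply, h2']
                by_contra hne'
                rcases hdom x hne' with hm | hm
                · exact hfresh x hm (by rwa [hF23])
                · exact hfresh2 x hm hx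
              have fact2 : ∀ x ∈ FA (Expr.letrec env3 r3), τ x = x := by
                intro x hx
                by_contra hτx
                rcases hτ2 x hτx with hm | ⟨y, hy, hgy⟩
                · exact (mem_FA_letrec.1 hx).2 (List.mem_toFinset.1 hm)
                · have hg1 : (π * π2) y ∈ env.map Prod.fst := fact3 y (List.mem_toFinset.1 hy)
                  rw [hgy] at hg1
                  exact hfresh x hg1 (by rwa [hF23])
              refine Aeq.letrec τ
                (ρ.trans ((finCongr hlen).trans (ρ2.trans ((finCongr hlen2).trans
                  (finCongr (hlen.trans hlen2).symm))))) (hlen.trans hlen2) ?_ ?_ ?_ ?_ ?_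
              · intro a ha
                rcases hτ2 a ha with hm | ⟨y, hy, hgy⟩
                · exact Or.inr (List.mem_toFinset.1 hm)
                · exact Or.inl (hgy ▸ fact3 y (List.mem_toFinset.1 hy))
              · intro i
                have hb1 := hbind i
                have hb2 := hbind2 (Fin.cast hlen (ρ i))
                have hmem3 : (env3.get (Fin.cast hlen2 (ρ2 (Fin.cast hlen (ρ i))))).1
                    ∈ (env3.map Prod.fst).toFinset :=
                  List.mem_toFinset.2 (List.mem_map.2 ⟨_, List.get_mem _ _, rfl⟩)
                have hτg := hτ1 _ hmem3
                simp only [List.get_eq_getElem, Fin.coe_cast, Equiv.trans_apply,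
                  finCongr_apply] at hb1 hb2 hτg ⊢
                rw [hτg, Equiv.Perm.mul_apply, hb2, hb1]
              · intro a ha
                rw [← hF23]
                exact hfresh a ha
              · intro i
                have hszi : esize (env.get i).2 ≤ n := by
                  have hmem : env.get i ∈ env := by
                    simp only [List.get_eq_getElem]; exact env.getElem_mem _
                  have h1 := esize_lt_letrec_env (r := r) hmem
                  simp only [esize_letrec] at h1 hsz
                  omega
                have hp := aeq_perm π (hbody2 (Fin.cast hlen (ρ i)))
                rw [permExpr_mul] at hp
                have hstep := IH _ _ _ hszi (hbody i) hp
                have hfixp : ∀ x ∈ FA (permExpr (π * π2)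
                    (env3.get (Fin.cast hlen2 (ρ2 (Fin.cast hlen (ρ i))))).2),
                    (τ * (π * π2)⁻¹) x = x := by
                  intro x hx
                  rw [FA_perm] at hx
                  obtain ⟨y, hy, rfl⟩ := Finset.mem_image.1 hx
                  rw [Equiv.Perm.mul_apply, Equiv.Perm.inv_apply_self]
                  by_cases hyB : y ∈ env3.map Prod.fst
                  · exact hτ1 y (List.mem_toFinset.2 hyB)
                  · have hyF : y ∈ FA (Expr.letrec env3 r3) :=
                      mem_FA_letrec.2 ⟨Or.inl ⟨_, List.get_mem _ _, hy⟩, hyB⟩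
                    rw [fact2 y hyF]
                    exact (fact1 y hyF).symm
                have hfix2 := aeq_perm_fix _ (τ * (π * π2)⁻¹) hfixp
                rw [permExpr_mul, show τ * (π * π2)⁻¹ * (π * π2) = τ by group] at hfix2
                have hfin := IH _ _ _ hszi hstep hfix2
                simp only [List.get_eq_getElem, Fin.coe_cast, Equiv.trans_apply,
                  finCongr_apply] at hfin ⊢
                exact hfin
              · have hszr : esize r ≤ n := by
                  have h1 := esize_lt_letrec_body (env := env) (r := r)
                  simp only [esize_letrec] at h1 hsz
                  omega
                have hp := aeq_perm π hr2
                rw [permExpr_mul] at hp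
                have hstep := IH _ _ _ hszr hr hp
                have hfixp : ∀ x ∈ FA (permExpr (π * π2) r3), (τ * (π * π2)⁻¹) x = x := by
                  intro x hx
                  rw [FA_perm] at hx
                  obtain ⟨y, hy, rfl⟩ := Finset.mem_image.1 hx
                  rw [Equiv.Perm.mul_apply, Equiv.Perm.inv_apply_self]
                  by_cases hyB : y ∈ env3.map Prod.fst
                  · exact hτ1 y (List.mem_toFinset.2 hyB)
                  · have hyF : y ∈ FA (Expr.letrec env3 r3) :=
                      mem_FA_letrec.2 ⟨Or.inr hy, hyB⟩
                    rw [fact2 y hyF]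
                    exact (fact1 y hyF).symm
                have hfix2 := aeq_perm_fix _ (τ * (π * π2)⁻¹) hfixp
                rw [permExpr_mul, show τ * (π * π2)⁻¹ * (π * π2) = τ by group] at hfix2
                exact IH _ _ _ hszr hstep hfix2

/-- α-equivalence on ground letrec expressions is an equivalence relation. -/
theorem aeq_equivalence : Equivalence Aeq :=
  ⟨aeq_refl, aeq_symm, fun {x y z} h1 h2 => aeq_trans (esize x) x y z le_rfl h1 h2⟩
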